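/- Let X be a random variable taking values in [0, ∞], let p := P(X = ∞), and suppose lim_{x→∞} x^α (1 - p - F_X(x)) = 0 for some α > 0, where F_X is the CDF restricted to [0,∞). Then for all c > 1, liminf_{δ ↓ 0} Q_X(1 - p - δ/c) / Q_X(1 - p - δ) ≤ c^{1/α}. -/

import Mathlib

open MeasureTheory Filter

/-- For a `[0,∞]`-valued random variable `X` with `p = P(X = ∞)`, if the upper tail of the
finite part decays faster than `x^{-α}` for some `α > 0`, i.e.
`x^α (1 - p - F_X(x)) → 0` as `x → ∞`, then for all `c > 1`,
`liminf_{δ ↓ 0} Q_X(1 - p - δ/c) / Q_X(1 - p - δ) ≤ c^{1/α}`. -/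
theorem liminf_quantile_ratio_le {Ω : Type*} [MeasurableSpace Ω]
    (μ : Measure Ω) [IsProbabilityMeasure μ] (X : Ω → ENNReal)
    (α : ℝ) (hα : 0 < α)
    (htail : Tendsto
      (fun x : ℝ => x ^ α *
        (1 - (μ {ω | X ω = ⊤}).toReal - (μ {ω | X ω ≤ ENNReal.ofReal x}).toReal))
      atTop (nhds 0)) :
    ∀ c : ℝ, 1 < c →
      liminf
        (fun δ : ℝ =>
          sInf {x : ℝ | 1 - (μ {ω | X ω = ⊤}).toReal - δ / c ≤
              (μ {ω | X ω ≤ ENNReal.ofReal x}).toReal} /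
          sInf {x : ℝ | 1 - (μ {ω | X ω = ⊤}).toReal - δ ≤
              (μ {ω | X ω ≤ ENNReal.ofReal x}).toReal})
        (nhdsWithin 0 (Set.Ioi 0)) ≤ c ^ (1 / α) := by
  intro c hc
  have hc0 : (0:ℝ) < c := lt_trans one_pos hc
  set p : ℝ := (μ {ω | X ω = ⊤}).toReal with hp
  let F : ℝ → ℝ := fun x => (μ {ω | X ω ≤ ENNReal.ofReal x}).toReal
  have htail2 : Tendsto (fun x : ℝ => x ^ α * (1 - p - F x)) atTop (nhds 0) := htail
  show liminf (fun δ : ℝ =>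
      sInf {x : ℝ | 1 - p - δ / c ≤ F x} / sInf {x : ℝ | 1 - p - δ ≤ F x})
      (nhdsWithin 0 (Set.Ioi 0)) ≤ c ^ (1 / α)
  have hFmono : Monotone F := fun x y hxy =>
    ENNReal.toReal_mono (measure_ne_top μ _)
      (measure_mono fun ω h => le_trans h (ENNReal.ofReal_le_ofReal hxy))
  have hF0le : ∀ x, F 0 ≤ F x := fun x =>
    ENNReal.toReal_mono (measure_ne_top μ _)
      (measure_mono fun ω h => le_trans h (le_trans ENNReal.ofReal_zero.le zero_le))
  have hQnonneg : ∀ t : ℝ, 0 ≤ sInf {x : ℝ | t ≤ F x} := by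
    intro t
    rcases le_or_gt t (F 0) with h | h
    · have huniv : {x : ℝ | t ≤ F x} = Set.univ :=
        Set.eq_univ_of_forall fun x => le_trans h (hF0le x)
      rw [huniv, Real.sInf_of_not_bddBelow not_bddBelow_univ]
    · refine Real.sInf_nonneg fun x hx => ?_
      by_contra hx0
      push_neg at hx0
      have := hFmono hx0.le
      have hx' : t ≤ F x := hx
      linarith
  have hQle : ∀ t x : ℝ, 0 < sInf {y : ℝ | t ≤ F y} → t ≤ F x →
      sInf {y : ℝ | t ≤ F y} ≤ x := by
    intro t x hpos hx
    by_cases hbdd : BddBelow {y : ℝ | t ≤ F y}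
    · exact csInf_le hbdd hx
    · rw [Real.sInf_of_not_bddBelow hbdd] at hpos; exact absurd hpos (lt_irrefl 0)
  have htail' : ∀ ε > (0:ℝ), ∃ M : ℝ, ∀ x ≥ M, |x ^ α * (1 - p - F x)| < ε := by
    intro ε hε
    have h := (Metric.tendsto_nhds.mp htail2) ε hε
    rw [eventually_atTop] at h
    obtain ⟨M, hM⟩ := h
    exact ⟨M, fun x hx => by have := hM x hx; rwa [Real.dist_eq, sub_zero] at this⟩
  have key : ∀ ε > (0:ℝ), ∃ M' ≥ (1:ℝ), ∀ η > (0:ℝ),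
      1 - p - η ≤ F (max M' ((ε / η) ^ (1/α))) := by
    intro ε hε
    obtain ⟨M, hM⟩ := htail' ε hε
    refine ⟨max M 1, le_max_right _ _, fun η hη => ?_⟩
    set x := max (max M 1) ((ε / η) ^ (1/α)) with hxdef
    have hx1 : (1:ℝ) ≤ x := le_trans (le_max_right M 1) (le_max_left _ _)
    have hxpos : 0 < x := lt_of_lt_of_le one_pos hx1
    have hxM : M ≤ x := le_trans (le_max_left M 1) (le_max_left _ _)
    have hxa : 0 < x ^ α := Real.rpow_pos_of_pos hxpos α
    have h1 : x ^ α * (1 - p - F x) < ε := lt_of_abs_lt (hM x hxM)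
    have h0 : (0:ℝ) ≤ ε / η := le_of_lt (div_pos hε hη)
    have h2 : ε / η ≤ x ^ α := by
      have hxe : (ε / η) ^ (1/α) ≤ x := le_max_right _ _
      calc ε / η = ((ε / η) ^ (1/α)) ^ α := by
            rw [← Real.rpow_mul h0, one_div_mul_cancel hα.ne', Real.rpow_one]
        _ ≤ x ^ α := Real.rpow_le_rpow (Real.rpow_nonneg h0 _) hxe hα.le
    have h3 : 1 - p - F x < ε / x ^ α := by
      rw [lt_div_iff₀ hxa, mul_comm]; exact h1
    have h4 : ε / x ^ α ≤ η := by
      rw [div_le_iff₀ hxa]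
      calc ε = (ε / η) * η := by field_simp
        _ ≤ x ^ α * η := mul_le_mul_of_nonneg_right h2 hη.le
        _ = η * x ^ α := mul_comm _ _
    linarith
  have hb1 : (1:ℝ) < c ^ (1/α) :=
    Real.one_lt_rpow_iff_of_pos hc0 |>.mpr (Or.inl ⟨hc, by positivity⟩)
  set b := c ^ (1/α) with hbdef
  have hbpos : (0:ℝ) < b := lt_trans one_pos hb1
  refine liminf_le_of_frequently_le ?_
    ⟨0, Filter.eventually_map.2 (Filter.Eventually.of_forall
      fun δ => div_nonneg (hQnonneg _) (hQnonneg _))⟩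
  rw [Filter.frequently_iff]
  intro U hU
  rw [mem_nhdsGT_iff_exists_Ioo_subset] at hU
  obtain ⟨u, hu, hsub⟩ := hU
  by_contra hcon
  push_neg at hcon
  have hu0 : (0:ℝ) < u := hu
  have hstep : ∀ δ : ℝ, 0 < δ → δ < u →
      0 < sInf {x : ℝ | 1 - p - δ ≤ F x} ∧
      b * sInf {x : ℝ | 1 - p - δ ≤ F x} < sInf {x : ℝ | 1 - p - δ / c ≤ F x} := by
    intro δ h1 h2
    have hrat := hcon δ (hsub ⟨h1, h2⟩)
    have hD := hQnonneg (1 - p - δ)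
    rcases eq_or_lt_of_le hD with hD0 | hDpos
    · rw [← hD0, div_zero] at hrat; linarith
    · exact ⟨hDpos, (lt_div_iff₀ hDpos).mp hrat⟩
  set δ1 : ℝ := u / 2 with hδ1def
  have hδ1pos : 0 < δ1 := half_pos hu0
  have hδ1lt : δ1 < u := half_lt_self hu0
  set D0 : ℝ := sInf {x : ℝ | 1 - p - δ1 ≤ F x} with hD0def
  have hD0pos : 0 < D0 := (hstep δ1 hδ1pos hδ1lt).1
  have hiter : ∀ n : ℕ, b ^ n * D0 ≤ sInf {x : ℝ | 1 - p - δ1 / c ^ n ≤ F x} := by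
    intro n
    induction n with
    | zero => simp [hD0def]
    | succ n ih =>
      have hδn_pos : 0 < δ1 / c ^ n := div_pos hδ1pos (pow_pos hc0 n)
      have hδn_lt : δ1 / c ^ n < u := by
        have h1 : δ1 / c ^ n ≤ δ1 := div_le_self hδ1pos.le (one_le_pow₀ hc.le)
        linarith
      have h := (hstep _ hδn_pos hδn_lt).2
      have hdd : δ1 / c ^ n / c = δ1 / c ^ (n + 1) := by
        rw [div_div, pow_succ]
      calc b ^ (n+1) * D0 = b * (b ^ n * D0) := by ring
        _ ≤ b * sInf {x : ℝ | 1 - p - δ1 / c ^ n ≤ F x} :=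
            mul_le_mul_of_nonneg_left ih hbpos.le
        _ ≤ sInf {x : ℝ | 1 - p - δ1 / c ^ n / c ≤ F x} := h.le
        _ = sInf {x : ℝ | 1 - p - δ1 / c ^ (n+1) ≤ F x} := by rw [hdd]
  have hεpos : 0 < δ1 * (D0/2) ^ α :=
    mul_pos hδ1pos (Real.rpow_pos_of_pos (half_pos hD0pos) α)
  obtain ⟨M', hM'1, hM'⟩ := key _ hεpos
  have hub : ∀ n : ℕ, sInf {x : ℝ | 1 - p - δ1 / c ^ n ≤ F x} ≤ max M' (D0/2 * b ^ n) := by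
    intro n
    have hηpos : 0 < δ1 / c ^ n := div_pos hδ1pos (pow_pos hc0 n)
    have hmem := hM' _ hηpos
    have e1 : δ1 * (D0/2) ^ α / (δ1 / c ^ n) = (D0/2) ^ α * c ^ n := by
      field_simp
    have e2 : ((D0/2) ^ α * c ^ n) ^ (1/α) = D0/2 * b ^ n := by
      rw [Real.mul_rpow (by positivity) (by positivity),
        ← Real.rpow_mul (by positivity), mul_one_div_cancel hα.ne', Real.rpow_one,
        ← Real.rpow_natCast c n, ← Real.rpow_mul hc0.le, hbdef,
        ← Real.rpow_natCast (c ^ (1/α)) n, ← Real.rpow_mul hc0.le, mul_comm (1/α) (n:ℝ)]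
    rw [e1, e2] at hmem
    have hpos : 0 < sInf {x : ℝ | 1 - p - δ1 / c ^ n ≤ F x} :=
      lt_of_lt_of_le (mul_pos (pow_pos hbpos n) hD0pos) (hiter n)
    exact hQle _ _ hpos hmem
  obtain ⟨n, hn⟩ := ((tendsto_pow_atTop_atTop_of_one_lt hb1).eventually
    (eventually_ge_atTop ((M' + 1) / D0))).exists
  have hbn : M' < b ^ n * D0 := by
    have := (div_le_iff₀ hD0pos).mp hn
    linarith
  have h1 := hiter n
  have h2 := hub n
  have h3 : b ^ n * D0 ≤ max M' (D0/2 * b ^ n) := le_trans h1 h2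
  rcases le_max_iff.mp h3 with h | h
  · linarith
  · nlinarith [pow_pos hbpos n]
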